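/- Let 0 < H ≤ 1 and let x be a nonzero real number. Then Γ(H)² / |Γ(H + ix)|² ≥ sinh(πx)/(πx), where Γ denotes the Gamma function extended to the complex plane and |Γ(H + ix)| is the modulus of its value at H + ix. -/

import Mathlib

open Real Finset Nat Filter

lemma abs_gammaSeq_sq (z : ℂ) (n : ℕ) (hn : 0 < n) :
    ‖Complex.GammaSeq z n‖ ^ 2
      = ((n : ℝ) ^ z.re * n !) ^ 2 / ∏ j ∈ range (n + 1), ‖z + j‖ ^ 2 := by
  rw [Complex.GammaSeq, norm_div, norm_mul, norm_prod, div_pow, mul_pow, ← prod_pow,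
    Complex.norm_natCast, show ((n : ℂ)) = ((n : ℝ) : ℂ) by push_cast; ring,
    Complex.norm_cpow_eq_rpow_re_of_pos (by exact_mod_cast hn), mul_pow]

lemma normSq_comp (H x : ℝ) (j : ℕ) :
    ‖(H : ℂ) + x * Complex.I + j‖ ^ 2 = (H + j) ^ 2 + x ^ 2 := by
  rw [Complex.sq_norm]
  simp [Complex.normSq_apply]
  ring

lemma normSq_real (H : ℝ) (j : ℕ) :
    ‖(H : ℂ) + j‖ ^ 2 = (H + j) ^ 2 := by
  rw [Complex.sq_norm]
  simp [Complex.normSq_apply]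
  ring

lemma ratio_div_helper (N M p q p' q' : ℝ) (hN : 0 ≤ N) (hM : 0 ≤ M)
    (hp' : 0 < p') (hq' : 0 < q') (h : p' * q' ≤ p * q) :
    N / p * (M / q) ≤ N / p' * (M / q') := by
  rw [_root_.div_mul_div_comm, _root_.div_mul_div_comm]
  exact div_le_div_of_nonneg_left (by positivity) (by positivity) h

lemma pointwise_seq_ineq (H x : ℝ) (hH₀ : 0 < H) (hH₁ : H ≤ 1) (n : ℕ) (hn : 0 < n) :
    ‖Complex.GammaSeq ((H : ℂ) + x * Complex.I) n‖ ^ 2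
        * ‖Complex.GammaSeq 1 n‖ ^ 2
      ≤ ‖Complex.GammaSeq (H : ℂ) n‖ ^ 2
        * ‖Complex.GammaSeq (1 + (x : ℂ) * Complex.I) n‖ ^ 2 := by
  rw [abs_gammaSeq_sq _ n hn, abs_gammaSeq_sq _ n hn, abs_gammaSeq_sq _ n hn,
    abs_gammaSeq_sq _ n hn]
  have e1 : ∀ j ∈ range (n+1), ‖(H : ℂ) + x * Complex.I + j‖ ^ 2
      = (H + j) ^ 2 + x ^ 2 := fun j _ => normSq_comp H x j
  have e2 : ∀ j ∈ range (n+1), ‖(1 : ℂ) + j‖ ^ 2 = ((1:ℝ) + j) ^ 2 := by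
    intro j _; simpa using normSq_real 1 j
  have e3 : ∀ j ∈ range (n+1), ‖(H : ℂ) + j‖ ^ 2 = (H + j) ^ 2 :=
    fun j _ => normSq_real H j
  have e4 : ∀ j ∈ range (n+1), ‖(1 : ℂ) + (x:ℂ) * Complex.I + j‖ ^ 2
      = ((1:ℝ) + j) ^ 2 + x ^ 2 := by
    intro j _; simpa using normSq_comp 1 x j
  rw [prod_congr rfl e1, prod_congr rfl e2, prod_congr rfl e3, prod_congr rfl e4]
  have hre1 : ((H : ℂ) + x * Complex.I).re = H := by simp
  have hre2 : ((1 : ℂ)).re = 1 := by simp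
  have hre3 : ((H : ℂ)).re = H := by simp
  have hre4 : ((1 : ℂ) + (x:ℂ) * Complex.I).re = 1 := by simp
  rw [hre1, hre2, hre3, hre4]
  apply ratio_div_helper
  · positivity
  · positivity
  · apply Finset.prod_pos; intro j _; positivity
  · apply Finset.prod_pos; intro j _; positivity
  · rw [← prod_mul_distrib, ← prod_mul_distrib]
    apply Finset.prod_le_prod
    · intro j _; positivity
    · intro j _
      have h1 : (H + j : ℝ) ≤ 1 + j := by linarith
      have h2 : (0 : ℝ) < H + j := by positivity
      nlinarith [sq_nonneg x, mul_le_mul h1 h1 h2.le (by linarith : (0:ℝ) ≤ 1 + (j:ℝ))]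

lemma gamma_mono_ineq (H x : ℝ) (hH₀ : 0 < H) (hH₁ : H ≤ 1) :
    ‖Complex.Gamma ((H : ℂ) + x * Complex.I)‖ ^ 2
        * ‖Complex.Gamma 1‖ ^ 2
      ≤ ‖Complex.Gamma (H : ℂ)‖ ^ 2
        * ‖Complex.Gamma (1 + (x : ℂ) * Complex.I)‖ ^ 2 := by
  have key : ∀ z : ℂ, Tendsto (fun n => ‖Complex.GammaSeq z n‖ ^ 2) atTop
      (nhds (‖Complex.Gamma z‖ ^ 2)) := fun z =>
    (((continuous_norm.tendsto _).comp (Complex.GammaSeq_tendsto_Gamma z)).pow 2)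
  refine le_of_tendsto_of_tendsto ((key _).mul (key _)) ((key _).mul (key _)) ?_
  filter_upwards [eventually_gt_atTop 0] with n hn
  exact pointwise_seq_ineq H x hH₀ hH₁ n hn

lemma gamma_one_add_ix (x : ℝ) (hx : x ≠ 0) :
    ‖Complex.Gamma (1 + (x : ℂ) * Complex.I)‖ ^ 2
      = π * x / Real.sinh (π * x) := by
  have hxI : (x : ℂ) * Complex.I ≠ 0 := by
    simp [Complex.ext_iff, hx]
  have hsinh : Real.sinh (π * x) ≠ 0 := by
    simp [Real.sinh_eq_zero]
    exact hx
  have hconj : (starRingEnd ℂ) (1 + (x : ℂ) * Complex.I) = 1 - (x : ℂ) * Complex.I := by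
    simp [Complex.ext_iff]
  have key : ((‖Complex.Gamma (1 + (x : ℂ) * Complex.I)‖ ^ 2 : ℝ) : ℂ)
      = ((π * x / Real.sinh (π * x) : ℝ) : ℂ) := by
    rw [Complex.sq_norm, ← Complex.mul_conj, ← Complex.Gamma_conj, hconj]
    have h1 : (1 : ℂ) + (x : ℂ) * Complex.I = (x : ℂ) * Complex.I + 1 := by ring
    rw [h1, Complex.Gamma_add_one _ hxI, mul_assoc,
      show (1 : ℂ) - (x:ℂ)*Complex.I = 1 - ((x:ℂ)*Complex.I) from rfl,
      Complex.Gamma_mul_Gamma_one_sub]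
    have hsin : Complex.sin (↑π * ((x:ℂ) * Complex.I)) = (Real.sinh (π*x) : ℂ) * Complex.I := by
      rw [show (↑π * ((x:ℂ) * Complex.I)) = ((π * x : ℝ) : ℂ) * Complex.I by push_cast; ring,
        Complex.sin_mul_I, Complex.ofReal_sinh]
    rw [hsin]
    have hI := Complex.I_ne_zero
    have hs : (Real.sinh (π*x) : ℂ) ≠ 0 := by exact_mod_cast hsinh
    field_simp
    rw [Complex.ofReal_div, mul_div_assoc', mul_div_cancel_left₀ _ hs]
    push_cast; ring
  exact_mod_cast key

/-- For `0 < H ≤ 1` and `x ≠ 0`,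
`Γ(H)² / |Γ(H + ix)|² ≥ sinh(πx)/(πx)`. -/
theorem gamma_modulus_ratio_ge (H : ℝ) (hH₀ : 0 < H) (hH₁ : H ≤ 1)
    (x : ℝ) (hx : x ≠ 0) :
    Real.Gamma H ^ 2 / ‖Complex.Gamma ((H : ℂ) + x * Complex.I)‖ ^ 2
      ≥ Real.sinh (π * x) / (π * x) := by
  set A := ‖Complex.Gamma ((H : ℂ) + x * Complex.I)‖ ^ 2 with hAdef
  set B := ‖Complex.Gamma (1 + (x : ℂ) * Complex.I)‖ ^ 2 with hBdef
  have hA : 0 < A := by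
    apply pow_pos
    apply norm_pos_iff.mpr
    apply Complex.Gamma_ne_zero_of_re_pos
    simpa using hH₀
  have hB : 0 < B := by
    apply pow_pos
    apply norm_pos_iff.mpr
    apply Complex.Gamma_ne_zero_of_re_pos
    simp
  have hBval : B = π * x / Real.sinh (π * x) := gamma_one_add_ix x hx
  have habsH : ‖Complex.Gamma ((H : ℂ))‖ = Real.Gamma H := by
    rw [Complex.Gamma_ofReal, Complex.norm_real, Real.norm_eq_abs,
      abs_of_pos (Real.Gamma_pos_of_pos hH₀)]
  have h1 : ‖Complex.Gamma 1‖ = 1 := by simp [Complex.Gamma_one]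
  have key := gamma_mono_ineq H x hH₀ hH₁
  rw [h1, habsH, one_pow, mul_one] at key
  rw [ge_iff_le, show Real.sinh (π * x) / (π * x) = 1 / B by
    rw [hBval, one_div, inv_div], div_le_div_iff₀ hB hA]
  rw [← hAdef, ← hBdef] at key
  linarith [key]
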